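/- Let Σ be a (possibly infinite) alphabet, S a commutative semiring, and L : Σ* → S a weighted language with linear representation (Q, in, out, μ) such that the free semimodule S^Q has finite length N = ℓ(S^Q). If there exist words a, b, c ∈ Σ* such that a b^N c ∈ supp L, then a b^k c ∈ supp L for infinitely many k ∈ ℕ. -/

import Mathlib

/-- The length of an `S`-semimodule `M`: the supremum of all `r : ℕ` such that there exists a
strictly increasing chain `M₀ ⊊ M₁ ⊊ ⋯ ⊊ M_r` of subsemimodules (i.e. `S`-submodules) of `M`. -/
noncomputable def semimoduleLength (S M : Type*) [Semiring S] [AddCommMonoid M]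
    [Module S M] : ℕ∞ :=
  ⨆ r : {r : ℕ // ∃ c : Fin (r + 1) → Submodule S M, StrictMono c}, ((r : ℕ) : ℕ∞)

/-- Pumping lemma over a possibly infinite alphabet: if `L` has a linear representation
`(Q, fin, fout, μ)` with `S^Q` of finite length `N`, and `a b^N c ∈ supp L`, then
`a b^k c ∈ supp L` for infinitely many `k`. -/
theorem weighted_pumping_infinite_alphabet {A : Type*} {S : Type*} [CommSemiring S]
    {Q : Type*} [Fintype Q] [DecidableEq Q]
    (fin fout : Q → S) (μ : FreeMonoid A →* Matrix Q Q S) (L : FreeMonoid A → S)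
    (hrep : ∀ w, L w = dotProduct (Matrix.vecMul fin (μ w)) fout)
    (hlen : semimoduleLength S (Q → S) ≠ ⊤)
    (a b c : FreeMonoid A)
    (hw : L (a * b ^ (semimoduleLength S (Q → S)).toNat * c) ≠ 0) :
    {k : ℕ | L (a * b ^ k * c) ≠ 0}.Infinite := by
  set N : ℕ := (semimoduleLength S (Q → S)).toNat with hN
  -- the sequence of row vectors
  set v : ℕ → (Q → S) := fun k => Matrix.vecMul fin (μ (a * b ^ k)) with hv
  -- the output linear map
  set f : (Q → S) →ₗ[S] S :=
    { toFun := fun u => dotProduct (Matrix.vecMul u (μ c)) fout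
      map_add' := fun x y => by simp [Matrix.add_vecMul, add_dotProduct]
      map_smul' := fun s x => by
        simp [Matrix.smul_vecMul, smul_dotProduct, smul_eq_mul] } with hf
  -- the transition linear map
  set T : (Q → S) →ₗ[S] (Q → S) :=
    { toFun := fun u => Matrix.vecMul u (μ b)
      map_add' := fun x y => by simp [Matrix.add_vecMul]
      map_smul' := fun s x => by simp [Matrix.smul_vecMul] } with hT
  have hfv : ∀ k, f (v k) = L (a * b ^ k * c) := by
    intro k
    have : μ (a * b ^ k * c) = μ (a * b ^ k) * μ c := map_mul μ _ _
    simp [hf, hv, hrep, this, Matrix.vecMul_vecMul]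
  have hTv : ∀ k, T (v k) = v (k + 1) := by
    intro k
    have h1 : μ (a * b ^ (k + 1)) = μ (a * b ^ k) * μ b := by
      rw [pow_succ, ← mul_assoc, map_mul]
    show Matrix.vecMul (v k) (μ b) = v (k + 1)
    rw [hv]
    dsimp only
    rw [h1, ← Matrix.vecMul_vecMul]
  -- the decreasing chain of submodules
  set W : ℕ → Submodule S (Q → S) := fun K => Submodule.span S (v '' Set.Ici K) with hW
  have hWanti : ∀ {K K' : ℕ}, K ≤ K' → W K' ≤ W K := by
    intro K K' h
    exact Submodule.span_mono (Set.image_mono (Set.Ici_subset_Ici.2 h))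
  have hvW : ∀ {m K : ℕ}, K ≤ m → v m ∈ W K := fun {m K} h =>
    Submodule.subset_span ⟨m, h, rfl⟩
  have hmap : ∀ K, Submodule.map T (W K) ≤ W (K + 1) := by
    intro K
    rw [hW, Submodule.map_span, ← Set.image_comp]
    apply Submodule.span_le.2
    rintro x ⟨n, hn, rfl⟩
    rw [Function.comp_apply, hTv n]
    exact SetLike.mem_coe.2 (hvW (Nat.succ_le_succ hn))
  -- pigeonhole: some step of the chain is not strict
  obtain ⟨j, hjN, hWj⟩ : ∃ j ≤ N, W j ≤ W (j + 1) := by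
    by_contra hcon
    push_neg at hcon
    have hstrict : ∀ j ≤ N, W (j + 1) < W j := fun j hj =>
      lt_of_le_of_ne (hWanti (Nat.le_succ j)) (fun h => (hcon j hj) (le_of_eq h.symm))
    set ch : Fin (N + 1 + 1) → Submodule S (Q → S) := fun i => W (N + 1 - (i : ℕ)) with hch
    have hmono : StrictMono ch := by
      rw [Fin.strictMono_iff_lt_succ]
      intro i
      have hi : (i : ℕ) ≤ N := Nat.lt_succ_iff.mp i.isLt
      have h1 : N + 1 - ((i : ℕ) + 1) = N - (i : ℕ) := by omega
      have h2 : N + 1 - (i : ℕ) = (N - (i : ℕ)) + 1 := by omega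
      simp only [hch, Fin.coe_castSucc, Fin.val_succ, h1, h2]
      exact hstrict _ (Nat.sub_le _ _)
    have hle : ((N + 1 : ℕ) : ℕ∞) ≤ semimoduleLength S (Q → S) :=
      le_iSup (fun r : {r : ℕ // ∃ c : Fin (r + 1) → Submodule S (Q → S), StrictMono c} =>
        ((r : ℕ) : ℕ∞)) ⟨N + 1, ch, hmono⟩
    rw [show semimoduleLength S (Q → S) = (N : ℕ∞) from (ENat.coe_toNat hlen).symm] at hle
    exact absurd (Nat.cast_le.mp hle) (by omega)
  -- the chain is increasing from j on
  have hvWsucc : ∀ m, j ≤ m → v m ∈ W (m + 1) := by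
    intro m hm
    induction m, hm using Nat.le_induction with
    | base => exact hWj (hvW le_rfl)
    | succ m hm ih =>
      have h2 : T (v m) ∈ W (m + 1 + 1) := hmap (m + 1) ⟨v m, ih, rfl⟩
      rwa [hTv m] at h2
  have hWmono : ∀ K, j ≤ K → W K ≤ W (K + 1) := by
    intro K hK
    apply Submodule.span_le.2
    rintro x ⟨m, hm, rfl⟩
    have hm' : K ≤ m := hm
    exact hWanti (by omega) (hvWsucc m (le_trans hK hm'))
  -- v N belongs to every W K
  have hvN : ∀ K, v N ∈ W K := by
    intro K
    rcases le_or_gt K N with h | h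
    · exact hWanti h (hvW le_rfl)
    · have : ∀ K, N ≤ K → v N ∈ W K := by
        intro K hK
        induction K, hK using Nat.le_induction with
        | base => exact hvW le_rfl
        | succ K hK ih => exact hWmono K (le_trans hjN hK) ih
      exact this K h.le
  -- conclude
  apply Set.infinite_of_forall_exists_gt
  intro K
  by_contra hcon
  push_neg at hcon
  have hzero : ∀ m, K + 1 ≤ m → f (v m) = 0 := by
    intro m hm
    rw [hfv m]
    by_contra h0
    exact absurd (hcon m h0) (by omega)
  have hker : W (K + 1) ≤ LinearMap.ker f := by
    apply Submodule.span_le.2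
    rintro x ⟨m, hm, rfl⟩
    exact LinearMap.mem_ker.2 (hzero m hm)
  have : f (v N) = 0 := LinearMap.mem_ker.1 (hker (hvN (K + 1)))
  rw [hfv N] at this
  exact hw this
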